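/- Let α₁ < α₂ < ... < αₙ be real numbers and 0 < x₁ < x₂ < ... < xₙ. Then the determinant of the n×n generalized (exponential) Vandermonde matrix with (i,j) entry x_j^{α_i} is strictly positive. -/

import Mathlib

open Matrix

/-- A nontrivial generalized polynomial with `n` strictly increasing real exponents cannot
vanish at `n` distinct positive points. -/
lemma gv_key : ∀ (n : ℕ) (α : Fin n → ℝ), StrictMono α → ∀ (c u : Fin n → ℝ),
    StrictMono u → (∀ j, 0 < u j) → (∀ j, ∑ i, c i * (u j) ^ (α i) = 0) → c = 0 := by
  intro n
  induction n with
  | zero =>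
    intro α _ c u _ _ _
    funext i; exact i.elim0
  | succ m ih =>
    intro α hα c u hu hupos hz
    set β : Fin m → ℝ := fun k => α k.succ - α 0 - 1 with hβdef
    set d : Fin m → ℝ := fun k => c k.succ * (α k.succ - α 0) with hddef
    set D : ℝ → ℝ := fun t => ∑ i, c i * (α i - α 0) * t ^ (α i - α 0 - 1) with hDdef
    set G : ℝ → ℝ := fun t => ∑ i, c i * t ^ (α i - α 0) with hGdef
    have hGderiv : ∀ t : ℝ, 0 < t → HasDerivAt G (D t) t := by
      intro t ht
      apply HasDerivAt.fun_sum
      intro i _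
      have := (Real.hasDerivAt_rpow_const (x := t) (p := α i - α 0) (Or.inl ht.ne')).const_mul
        (c i)
      simpa [mul_assoc, mul_comm, mul_left_comm] using this
    have hGzero : ∀ j, G (u j) = 0 := by
      intro j
      have hj := hz j
      have : G (u j) = (∑ i, c i * (u j) ^ (α i)) / (u j) ^ (α 0) := by
        rw [Finset.sum_div]
        refine Finset.sum_congr rfl fun i _ => ?_
        rw [Real.rpow_sub (hupos j), mul_div_assoc]
      rw [this, hj, zero_div]
    -- Rolle between consecutive zeros
    have hrolle : ∀ k : Fin m, ∃ v ∈ Set.Ioo (u k.castSucc) (u k.succ), D v = 0 := by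
      intro k
      have hab : u k.castSucc < u k.succ := hu Fin.castSucc_lt_succ
      have hpos : ∀ t ∈ Set.Icc (u k.castSucc) (u k.succ), 0 < t := fun t ht =>
        lt_of_lt_of_le (hupos k.castSucc) ht.1
      refine exists_hasDerivAt_eq_zero hab
        (fun t ht => ((hGderiv t (hpos t ht)).continuousAt).continuousWithinAt)
        ((hGzero k.castSucc).trans (hGzero k.succ).symm)
        (fun t ht => hGderiv t (hpos t (Set.mem_Icc_of_Ioo ht)))
    choose v hv hDv using hrolle
    have hvpos : ∀ k, 0 < v k := fun k =>
      lt_of_le_of_lt (le_of_lt (hupos k.castSucc)) (hv k).1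
    have hvmono : StrictMono v := by
      intro k k' hkk'
      calc v k < u k.succ := (hv k).2
        _ ≤ u k'.castSucc := hu.monotone (by
            rw [Fin.succ_le_castSucc_iff]; exact hkk')
        _ < v k' := (hv k').1
    have hβmono : StrictMono β := fun k k' h => by
      simp only [hβdef]
      have := hα (Fin.succ_lt_succ_iff.mpr h)
      linarith
    have hDsum : ∀ t : ℝ, D t = ∑ k, d k * t ^ β k := by
      intro t
      rw [hDdef, hddef, hβdef]
      simp [Fin.sum_univ_succ]
    have hd0 : d = 0 := by
      refine ih β hβmono d v hvmono hvpos fun k => ?_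
      rw [← hDsum]; exact hDv k
    have hcsucc : ∀ k : Fin m, c k.succ = 0 := by
      intro k
      have hk : d k = 0 := by rw [hd0]; rfl
      have hne : α k.succ - α 0 ≠ 0 := by
        have := hα (Fin.succ_pos k)
        linarith
      rcases mul_eq_zero.mp hk with h | h
      · exact h
      · exact absurd h hne
    have hc0 : c 0 = 0 := by
      have h0 := hz 0
      rw [Fin.sum_univ_succ] at h0
      have : ∑ k : Fin m, c k.succ * (u 0) ^ (α k.succ) = 0 :=
        Finset.sum_eq_zero fun k _ => by rw [hcsucc k, zero_mul]
      rw [this, add_zero] at h0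
      have hpow : (u 0 : ℝ) ^ (α 0) ≠ 0 := (Real.rpow_pos_of_pos (hupos 0) _).ne'
      exact (mul_eq_zero.mp h0).resolve_right hpow
    funext i
    refine Fin.cases ?_ ?_ i
    · exact hc0
    · exact hcsucc

lemma gv_det_ne_zero (n : ℕ) (α x : Fin n → ℝ)
    (hα : StrictMono α) (hx : StrictMono x) (hxpos : ∀ j, 0 < x j) :
    Matrix.det (Matrix.of fun i j : Fin n => (x j) ^ (α i)) ≠ 0 := by
  intro hdet
  have hdetT : Matrix.det (Matrix.of fun i j : Fin n => (x j) ^ (α i))ᵀ = 0 := by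
    rw [Matrix.det_transpose]; exact hdet
  obtain ⟨c, hc, hzero⟩ := (Matrix.exists_mulVec_eq_zero_iff).mpr hdetT
  apply hc
  refine gv_key n α hα c x hx hxpos fun j => ?_
  have := congrFun hzero j
  simpa [Matrix.mulVec, dotProduct, mul_comm] using this

theorem generalized_vandermonde_det_pos (n : ℕ) (α x : Fin n → ℝ)
    (hα : StrictMono α) (hx : StrictMono x) (hxpos : ∀ j, 0 < x j) :
    0 < Matrix.det (Matrix.of fun i j : Fin n => (x j) ^ (α i)) := by
  set F : ℝ → ℝ := fun s =>
    Matrix.det (Matrix.of fun i j : Fin n => (x j) ^ ((1 - s) * α i + s * (i : ℕ))) with hF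
  have hmono : ∀ s ∈ Set.Icc (0:ℝ) 1, StrictMono (fun i : Fin n => (1 - s) * α i + s * (i : ℕ)) := by
    intro s hs i j hij
    show (1 - s) * α i + s * ((i : ℕ) : ℝ) < (1 - s) * α j + s * ((j : ℕ) : ℝ)
    have h1 : (1 - s) * α i ≤ (1 - s) * α j :=
      mul_le_mul_of_nonneg_left (hα hij).le (by linarith [hs.2])
    have h2 : s * (i : ℕ) ≤ s * (j : ℕ) := by
      have h : (i : ℕ) < (j : ℕ) := hij
      exact mul_le_mul_of_nonneg_left (by exact_mod_cast h.le) hs.1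
    rcases eq_or_lt_of_le hs.1 with h0 | h0
    · have h1' : (1 - s) * α i < (1 - s) * α j := by
        rw [← h0]; simpa using hα hij
      linarith
    · have h2' : s * (i : ℕ) < s * (j : ℕ) := by
        have h : (i : ℕ) < (j : ℕ) := hij
        exact mul_lt_mul_of_pos_left (by exact_mod_cast h) h0
      linarith
  have hFne : ∀ s ∈ Set.Icc (0:ℝ) 1, F s ≠ 0 := fun s hs =>
    gv_det_ne_zero n _ x (hmono s hs) hx hxpos
  have hFcont : Continuous F := by
    apply Continuous.matrix_det
    apply continuous_matrix
    intro i j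
    have hrw : ∀ s : ℝ, (Matrix.of fun i j : Fin n =>
        (x j) ^ ((1 - s) * α i + s * (i : ℕ))) i j
        = Real.exp (Real.log (x j) * ((1 - s) * α i + s * (i : ℕ))) := by
      intro s
      simp only [Matrix.of_apply]
      rw [Real.rpow_def_of_pos (hxpos j)]
    simp only [hrw]
    exact Real.continuous_exp.comp (continuous_const.mul (by continuity))
  have hF1 : 0 < F 1 := by
    have hM : (Matrix.of fun i j : Fin n => (x j) ^ ((1 - (1:ℝ)) * α i + 1 * ((i:ℕ):ℝ)))
        = (Matrix.vandermonde x)ᵀ := by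
      ext i j
      rw [Matrix.of_apply, show (1 - (1:ℝ)) * α i + 1 * ((i:ℕ):ℝ) = ((i:ℕ):ℝ) by ring,
        Real.rpow_natCast]
      simp [Matrix.vandermonde]
    show Matrix.det (Matrix.of fun i j : Fin n => (x j) ^ ((1 - (1:ℝ)) * α i + 1 * ((i:ℕ):ℝ))) > 0
    rw [hM, Matrix.det_transpose, Matrix.det_vandermonde]
    refine Finset.prod_pos fun i _ => Finset.prod_pos fun j hj => ?_
    exact sub_pos.mpr (hx (Finset.mem_Ioi.mp hj))
  have hF0 : F 0 = Matrix.det (Matrix.of fun i j : Fin n => (x j) ^ (α i)) := by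
    show Matrix.det (Matrix.of fun i j : Fin n => (x j) ^ ((1 - (0:ℝ)) * α i + 0 * ((i:ℕ):ℝ)))
      = _
    congr 1
    ext i j
    norm_num
  rw [← hF0]
  by_contra hle
  push_neg at hle
  have hF0ne : F 0 ≠ 0 := hFne 0 ⟨le_refl 0, zero_le_one⟩
  have hF0lt : F 0 < 0 := lt_of_le_of_ne hle hF0ne
  have hsub : Set.Ioo (F 0) (F 1) ⊆ F '' Set.Ioo 0 1 :=
    intermediate_value_Ioo zero_le_one hFcont.continuousOn
  obtain ⟨s, hs, hFs⟩ := hsub ⟨hF0lt, hF1⟩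
  exact hFne s ⟨hs.1.le, hs.2.le⟩ hFs
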